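/- Let M be a complete pointed metric space with base point 0 = q, and let p ≠ q with [p,q] = {p,q}. Suppose μ in the closed unit ball of F(M) satisfies ⟨μ, f_{pq}⟩ = 1, where f_{pq} is the magic function. Then for every ε, α ∈ (0, 1/2), μ lies within distance 2ε of the subspace F([p,q]_α) (the closed span of Diracs of points of [p,q]_α). -/

import Mathlib

noncomputable section

open Metric Set

/-- The space of real-valued Lipschitz functions on `M` vanishing at `base`. -/
structure Lip0 (M : Type*) [MetricSpace M] (base : M) where
  toFun : M → ℝ
  exists_lip' : ∃ K, LipschitzWith K toFun
  map_base' : toFun base = 0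

namespace Lip0

variable {M : Type*} [MetricSpace M] {base : M}

instance : FunLike (Lip0 M base) M ℝ where
  coe := toFun
  coe_injective := by rintro ⟨f, _, _⟩ ⟨g, _, _⟩ h; simpa using h

@[simp] lemma map_base (f : Lip0 M base) : f base = 0 := f.map_base'

/-- The set of (nonnegative real) Lipschitz constants of `f`. -/
def lipSet (f : Lip0 M base) : Set ℝ :=
  {K | 0 ≤ K ∧ ∀ x y, |f x - f y| ≤ K * dist x y}

lemma lipSet_nonempty (f : Lip0 M base) : (lipSet f).Nonempty := by
  obtain ⟨K, hK⟩ := f.exists_lip'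
  exact ⟨K, K.coe_nonneg, fun x y => by
    have h := hK.dist_le_mul x y
    rw [Real.dist_eq] at h
    exact h⟩

lemma lipSet_bddBelow (f : Lip0 M base) : BddBelow (lipSet f) :=
  ⟨0, fun K hK => hK.1⟩

lemma sInf_mem_lipSet (f : Lip0 M base) : sInf (lipSet f) ∈ lipSet f := by
  constructor
  · exact le_csInf (lipSet_nonempty f) fun K hK => hK.1
  · intro x y
    rcases eq_or_ne x y with rfl | hxy
    · simp
    · have hd : 0 < dist x y := dist_pos.2 hxy
      rw [← div_le_iff₀ hd]
      exact le_csInf (lipSet_nonempty f) fun K hK => (div_le_iff₀ hd).2 (hK.2 x y)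

instance : Zero (Lip0 M base) :=
  ⟨⟨fun _ => 0, ⟨0, LipschitzWith.const 0⟩, rfl⟩⟩

instance : Add (Lip0 M base) :=
  ⟨fun f g => ⟨fun t => f t + g t, by
    obtain ⟨Kf, hf⟩ := f.exists_lip'; obtain ⟨Kg, hg⟩ := g.exists_lip'
    exact ⟨Kf + Kg, hf.add hg⟩, by simp⟩⟩

instance : Neg (Lip0 M base) :=
  ⟨fun f => ⟨fun t => -f t, by
    obtain ⟨Kf, hf⟩ := f.exists_lip'
    exact ⟨Kf, hf.neg⟩, by simp⟩⟩

def rsmul (c : ℝ) (f : Lip0 M base) : Lip0 M base :=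
  ⟨fun t => c * f t, by
    obtain ⟨Kf, hf⟩ := f.exists_lip'
    refine ⟨⟨|c|, abs_nonneg c⟩ * Kf, LipschitzWith.of_dist_le_mul fun x y => ?_⟩
    have h1 : dist (c * f x) (c * f y) = |c| * |f x - f y| := by
      rw [Real.dist_eq, ← abs_mul, mul_sub]
    have h2 := hf.dist_le_mul x y
    rw [Real.dist_eq] at h2
    rw [h1]
    calc |c| * |f x - f y| ≤ |c| * (Kf * dist x y) :=
          mul_le_mul_of_nonneg_left h2 (abs_nonneg c)
      _ = (⟨|c|, abs_nonneg c⟩ * Kf : NNReal) * dist x y := by show _ = |c| * (Kf : ℝ) * dist x y; ring, by simp⟩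

instance : SMul ℝ (Lip0 M base) := ⟨rsmul⟩
instance : SMul ℕ (Lip0 M base) := ⟨fun n => rsmul (n : ℝ)⟩
instance : SMul ℤ (Lip0 M base) := ⟨fun n => rsmul (n : ℝ)⟩
instance : Sub (Lip0 M base) := ⟨fun f g => f + -g⟩

@[simp] lemma coe_zero : ⇑(0 : Lip0 M base) = fun _ => 0 := rfl
@[simp] lemma coe_add (f g : Lip0 M base) : ⇑(f + g) = fun t => f t + g t := rfl
@[simp] lemma coe_neg (f : Lip0 M base) : ⇑(-f) = fun t => -f t := rfl
@[simp] lemma coe_smul (c : ℝ) (f : Lip0 M base) : ⇑(c • f) = fun t => c * f t := rfl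
@[simp] lemma coe_sub (f g : Lip0 M base) : ⇑(f - g) = fun t => f t - g t := by
  show (fun t => f t + -(g t)) = _
  funext t; ring

instance : AddCommGroup (Lip0 M base) :=
  (DFunLike.coe_injective (F := Lip0 M base)).addCommGroup _
    rfl (fun _ _ => rfl) (fun _ => rfl) (fun f g => coe_sub f g)
    (fun f n => by funext t; show (n : ℝ) * f t = n • f t; simp)
    (fun f n => by funext t; show (n : ℝ) * f t = n • f t; simp)

instance : Module ℝ (Lip0 M base) :=
  (DFunLike.coe_injective (F := Lip0 M base)).module ℝ
    { toFun := fun f : Lip0 M base => ⇑f, map_zero' := rfl, map_add' := fun _ _ => rfl }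
    (fun _ _ => rfl)

lemma lipSet_neg (f : Lip0 M base) : lipSet (-f) = lipSet f := by
  unfold lipSet
  ext K
  have e : ∀ x y : M, (-f) x - (-f) y = -(f x - f y) := fun x y => by
    show -f x - -f y = -(f x - f y); ring
  constructor <;> rintro ⟨h0, h⟩ <;> refine ⟨h0, fun x y => ?_⟩
  · have := h x y; rwa [e, abs_neg] at this
  · rw [e, abs_neg]; exact h x y

instance : NormedAddCommGroup (Lip0 M base) :=
  AddGroupNorm.toNormedAddCommGroup
  { toFun := fun f => sInf (lipSet f)
    map_zero' := by
      apply le_antisymm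
      · exact csInf_le (lipSet_bddBelow _) ⟨le_refl 0, fun x y => by simp⟩
      · exact (sInf_mem_lipSet (0 : Lip0 M base)).1
    add_le' := fun f g => by
      apply csInf_le (lipSet_bddBelow _)
      refine ⟨add_nonneg (sInf_mem_lipSet f).1 (sInf_mem_lipSet g).1, fun x y => ?_⟩
      have hf := (sInf_mem_lipSet f).2 x y
      have hg := (sInf_mem_lipSet g).2 x y
      calc |(f + g) x - (f + g) y| = |(f x - f y) + (g x - g y)| := by
            simp [coe_add]; ring_nf
        _ ≤ |f x - f y| + |g x - g y| := abs_add_le _ _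
        _ ≤ sInf (lipSet f) * dist x y + sInf (lipSet g) * dist x y := add_le_add hf hg
        _ = (sInf (lipSet f) + sInf (lipSet g)) * dist x y := by ring
    neg' := fun f => by show sInf (lipSet (-f)) = sInf (lipSet f); rw [lipSet_neg]
    eq_zero_of_map_eq_zero' := fun f hf => by
      have hf' : sInf (lipSet f) = 0 := hf
      apply DFunLike.coe_injective
      funext t
      have h := (sInf_mem_lipSet f).2 t base
      rw [hf', zero_mul] at h
      have h0 : f t - f base = 0 := abs_nonpos_iff.1 h
      show f t = (0 : Lip0 M base) t
      have : (0 : Lip0 M base) t = 0 := rfl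
      rw [this]
      simpa using h0 }

lemma norm_def (f : Lip0 M base) : ‖f‖ = sInf (lipSet f) := rfl

instance : NormedSpace ℝ (Lip0 M base) where
  norm_smul_le c f := by
    rw [norm_def, norm_def, Real.norm_eq_abs]
    apply csInf_le (lipSet_bddBelow _)
    refine ⟨mul_nonneg (abs_nonneg c) (sInf_mem_lipSet f).1, fun x y => ?_⟩
    have hf := (sInf_mem_lipSet f).2 x y
    calc |(c • f) x - (c • f) y| = |c| * |f x - f y| := by
          rw [coe_smul]; rw [← abs_mul]; ring_nf
      _ ≤ |c| * (sInf (lipSet f) * dist x y) :=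
          mul_le_mul_of_nonneg_left hf (abs_nonneg c)
      _ = |c| * sInf (lipSet f) * dist x y := by ring

lemma norm_apply_le (f : Lip0 M base) (x y : M) : |f x - f y| ≤ ‖f‖ * dist x y :=
  (sInf_mem_lipSet f).2 x y

end Lip0

open Lip0 NormedSpace

variable (M : Type*) [MetricSpace M]

/-- The Dirac evaluation functional at `x`. -/
def deltaF (base x : M) : StrongDual ℝ (Lip0 M base) :=
  LinearMap.mkContinuous
    { toFun := fun f => f x
      map_add' := fun _ _ => rfl
      map_smul' := fun _ _ => rfl }
    (dist x base)
    (fun f => by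
      have h := Lip0.norm_apply_le f x base
      simp only [Lip0.map_base, sub_zero] at h
      rw [Real.norm_eq_abs, mul_comm]; exact h)

variable {M}

@[simp] lemma deltaF_apply (base x : M) (f : Lip0 M base) : deltaF M base x f = f x := rfl

/-- The molecule `(δ x - δ y)/d(x,y)`. -/
def molecule (base x y : M) : StrongDual ℝ (Lip0 M base) :=
  (dist x y)⁻¹ • (deltaF M base x - deltaF M base y)

variable (M) in
/-- The Lipschitz-free space over `M`, realized as the closed linear span of the Dirac
evaluations inside the dual of `Lip0 M base`. -/
def FreeSpace (base : M) : Submodule ℝ (StrongDual ℝ (Lip0 M base)) :=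
  (Submodule.span ℝ (Set.range (deltaF M base))).topologicalClosure

variable (M) in
/-- The subspace of the free space generated by the Diracs of a subset `S ⊆ M`. -/
def FreeSpaceOn (base : M) (S : Set M) : Submodule ℝ (StrongDual ℝ (Lip0 M base)) :=
  (Submodule.span ℝ (deltaF M base '' S)).topologicalClosure

lemma deltaF_mem (base x : M) : deltaF M base x ∈ FreeSpace M base :=
  Submodule.le_topologicalClosure _ (Submodule.subset_span ⟨x, rfl⟩)

lemma molecule_mem (base x y : M) : molecule base x y ∈ FreeSpace M base :=
  Submodule.smul_mem _ _ (Submodule.sub_mem _ (deltaF_mem base x) (deltaF_mem base y))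

/-- The molecule as an element of the free space. -/
def mol (base x y : M) : ↥(FreeSpace M base) := ⟨molecule base x y, molecule_mem base x y⟩

/-- The "magic function" of Ivakhno, Kadets and Werner associated to the pair `(p, q)`,
with base point `o`. -/
def magicFun (o p q : M) (t : M) : ℝ :=
  (dist p q / 2) *
    ((dist t q - dist t p) / (dist t q + dist t p) -
      (dist o q - dist o p) / (dist o q + dist o p))


/-! ### Auxiliary machinery for Lemma 5 -/

section Aux

variable {M : Type*} [MetricSpace M]

lemma deltaF_base (q : M) : deltaF M q q = 0 := by
  ext f; simp

/-- The sum of elementary molecules described by a list of (coefficient, point, point). -/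
def repSum (q : M) (l : List (ℝ × M × M)) : StrongDual ℝ (Lip0 M q) :=
  (l.map fun t => t.1 • (deltaF M q t.2.1 - deltaF M q t.2.2)).sum

/-- The transportation cost of a list of (coefficient, point, point). -/
def repCost (l : List (ℝ × M × M)) : ℝ :=
  (l.map fun t => |t.1| * dist t.2.1 t.2.2).sum

lemma repCost_nonneg (l : List (ℝ × M × M)) : 0 ≤ repCost l := by
  apply List.sum_nonneg
  intro x hx
  simp only [List.mem_map] at hx
  obtain ⟨t, -, rfl⟩ := hx
  positivity

@[simp] lemma repSum_nil (q : M) : repSum q ([] : List (ℝ × M × M)) = 0 := rfl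
@[simp] lemma repCost_nil : repCost ([] : List (ℝ × M × M)) = 0 := rfl

lemma repSum_cons (q : M) (t : ℝ × M × M) (l : List (ℝ × M × M)) :
    repSum q (t :: l) = t.1 • (deltaF M q t.2.1 - deltaF M q t.2.2) + repSum q l := by
  simp [repSum]

lemma repCost_cons (t : ℝ × M × M) (l : List (ℝ × M × M)) :
    repCost (t :: l) = |t.1| * dist t.2.1 t.2.2 + repCost l := by
  simp [repCost]

lemma repSum_append (q : M) (l₁ l₂ : List (ℝ × M × M)) :
    repSum q (l₁ ++ l₂) = repSum q l₁ + repSum q l₂ := by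
  simp [repSum]

lemma repCost_append (l₁ l₂ : List (ℝ × M × M)) :
    repCost (l₁ ++ l₂) = repCost l₁ + repCost l₂ := by
  simp [repCost]

lemma repSum_smul (q : M) (c : ℝ) (l : List (ℝ × M × M)) :
    repSum q (l.map fun t => (c * t.1, t.2)) = c • repSum q l := by
  induction l with
  | nil => simp
  | cons t l ih =>
      simp only [List.map_cons, repSum_cons, ih, smul_add, mul_smul]

lemma repCost_smul (c : ℝ) (l : List (ℝ × M × M)) :
    repCost (l.map fun t => (c * t.1, t.2)) = |c| * repCost l := by
  induction l with
  | nil => simp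
  | cons t l ih =>
      simp only [List.map_cons, repCost_cons, ih, abs_mul, mul_add, mul_assoc]

lemma norm_deltaF_sub (q x y : M) : ‖deltaF M q x - deltaF M q y‖ ≤ dist x y := by
  apply ContinuousLinearMap.opNorm_le_bound _ dist_nonneg
  intro f
  have h := Lip0.norm_apply_le f x y
  simpa [Real.norm_eq_abs, mul_comm] using h

lemma norm_repSum_le (q : M) (l : List (ℝ × M × M)) : ‖repSum q l‖ ≤ repCost l := by
  induction l with
  | nil => simp
  | cons t l ih =>
      rw [repSum_cons, repCost_cons]
      refine (norm_add_le _ _).trans (add_le_add ?_ ih)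
      rw [norm_smul, Real.norm_eq_abs]
      exact mul_le_mul_of_nonneg_left (norm_deltaF_sub q _ _) (abs_nonneg _)

lemma repSum_apply (q : M) (l : List (ℝ × M × M)) (f : Lip0 M q) :
    repSum q l f = (l.map fun t => t.1 * (f t.2.1 - f t.2.2)).sum := by
  induction l with
  | nil => simp
  | cons t l ih =>
      rw [repSum_cons, List.map_cons, List.sum_cons, ← ih]
      simp

lemma exists_rep (q : M) (m : StrongDual ℝ (Lip0 M q))
    (hm : m ∈ Submodule.span ℝ (Set.range (deltaF M q))) :
    ∃ l : List (ℝ × M × M), repSum q l = m := by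
  induction hm using Submodule.span_induction with
  | mem x hx =>
      obtain ⟨z, rfl⟩ := hx
      exact ⟨[(1, z, q)], by simp [repSum_cons, deltaF_base]⟩
  | zero => exact ⟨[], by simp⟩
  | add x y hx hy ihx ihy =>
      obtain ⟨l₁, h₁⟩ := ihx; obtain ⟨l₂, h₂⟩ := ihy
      exact ⟨l₁ ++ l₂, by rw [repSum_append, h₁, h₂]⟩
  | smul c x hx ihx =>
      obtain ⟨l, h⟩ := ihx
      exact ⟨l.map fun t => (c * t.1, t.2), by rw [repSum_smul, h]⟩

/-- The set of costs of representations of `m`. -/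
def repSet (q : M) (m : StrongDual ℝ (Lip0 M q)) : Set ℝ :=
  {c | ∃ l, repSum q l = m ∧ repCost l = c}

lemma repSet_bddBelow (q : M) (m : StrongDual ℝ (Lip0 M q)) : BddBelow (repSet q m) :=
  ⟨0, by rintro c ⟨l, -, rfl⟩; exact repCost_nonneg l⟩

/-- The transportation-cost norm candidate. -/
def NW (q : M) (m : StrongDual ℝ (Lip0 M q)) : ℝ := sInf (repSet q m)

lemma NW_le (q : M) {m : StrongDual ℝ (Lip0 M q)} {l : List (ℝ × M × M)} (h : repSum q l = m) :
    NW q m ≤ repCost l :=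
  csInf_le (repSet_bddBelow q m) ⟨l, h, rfl⟩

lemma NW_nonneg (q : M) (m : StrongDual ℝ (Lip0 M q))
    (hm : m ∈ Submodule.span ℝ (Set.range (deltaF M q))) : 0 ≤ NW q m := by
  obtain ⟨l, hl⟩ := exists_rep q m hm
  exact le_csInf ⟨repCost l, l, hl, rfl⟩ (by rintro c ⟨l', -, rfl⟩; exact repCost_nonneg l')

lemma NW_add (q : M) (u v : StrongDual ℝ (Lip0 M q))
    (hu : u ∈ Submodule.span ℝ (Set.range (deltaF M q)))
    (hv : v ∈ Submodule.span ℝ (Set.range (deltaF M q))) :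
    NW q (u + v) ≤ NW q u + NW q v := by
  refine le_of_forall_pos_le_add fun ε hε => ?_
  obtain ⟨lu, hlu⟩ := exists_rep q u hu
  obtain ⟨lv, hlv⟩ := exists_rep q v hv
  obtain ⟨cu, ⟨l₁, h₁, rfl⟩, hcu⟩ :=
    Real.lt_sInf_add_pos (s := repSet q u) ⟨repCost lu, lu, hlu, rfl⟩ (half_pos hε)
  obtain ⟨cv, ⟨l₂, h₂, rfl⟩, hcv⟩ :=
    Real.lt_sInf_add_pos (s := repSet q v) ⟨repCost lv, lv, hlv, rfl⟩ (half_pos hε)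
  have : NW q (u + v) ≤ repCost (l₁ ++ l₂) :=
    NW_le q (by rw [repSum_append, h₁, h₂])
  rw [repCost_append] at this
  have := this.trans (add_le_add hcu.le hcv.le)
  calc NW q (u + v) ≤ NW q u + ε / 2 + (NW q v + ε / 2) := this
    _ = NW q u + NW q v + ε := by ring

lemma NW_smul_le (q : M) (c : ℝ) (hc : 0 ≤ c) (m : StrongDual ℝ (Lip0 M q))
    (hm : m ∈ Submodule.span ℝ (Set.range (deltaF M q))) :
    NW q (c • m) ≤ c * NW q m := by
  refine le_of_forall_pos_le_add fun ε hε => ?_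
  obtain ⟨lm, hlm⟩ := exists_rep q m hm
  rcases eq_or_lt_of_le hc with rfl | hc'
  · obtain ⟨l, hl⟩ := exists_rep q m hm
    have : NW q ((0:ℝ) • m) ≤ repCost ([] : List (ℝ × M × M)) := NW_le q (by simp)
    simpa using this.trans (by positivity)
  · obtain ⟨cm, ⟨l, hl, rfl⟩, hcm⟩ :=
      Real.lt_sInf_add_pos (s := repSet q m) ⟨repCost lm, lm, hlm, rfl⟩
        (div_pos hε hc')
    have h1 : NW q (c • m) ≤ repCost (l.map fun t => (c * t.1, t.2)) :=
      NW_le q (by rw [repSum_smul, hl])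
    rw [repCost_smul, abs_of_nonneg hc] at h1
    have : c * repCost l ≤ c * (NW q m + ε / c) :=
      mul_le_mul_of_nonneg_left hcm.le hc
    rw [mul_add, mul_div_cancel₀ _ hc'.ne'] at this
    exact h1.trans this

lemma NW_smul (q : M) (c : ℝ) (hc : 0 < c) (m : StrongDual ℝ (Lip0 M q))
    (hm : m ∈ Submodule.span ℝ (Set.range (deltaF M q))) :
    NW q (c • m) = c * NW q m := by
  refine le_antisymm (NW_smul_le q c hc.le m hm) ?_
  have h2 : NW q (c⁻¹ • (c • m)) ≤ c⁻¹ * NW q (c • m) :=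
    NW_smul_le q c⁻¹ (inv_nonneg.2 hc.le) (c • m) (Submodule.smul_mem _ _ hm)
  rw [inv_smul_smul₀ hc.ne'] at h2
  calc c * NW q m ≤ c * (c⁻¹ * NW q (c • m)) := mul_le_mul_of_nonneg_left h2 hc.le
    _ = NW q (c • m) := by field_simp

lemma NW_mol_le (q x y : M) : NW q (deltaF M q x - deltaF M q y) ≤ dist x y := by
  have : repSum q [((1:ℝ), x, y)] = deltaF M q x - deltaF M q y := by
    simp [repSum_cons]
  have h := NW_le q this
  simp only [repCost_cons, repCost_nil, abs_one, one_mul, add_zero] at h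
  exact h

set_option maxHeartbeats 1000000 in
/-- Key duality step: the transportation cost is bounded by the dual norm. -/
lemma NW_le_norm (q : M) (m : StrongDual ℝ (Lip0 M q))
    (hm : m ∈ Submodule.span ℝ (Set.range (deltaF M q))) : NW q m ≤ ‖m‖ := by
  rcases eq_or_ne m 0 with rfl | hm0
  · have h : NW q (0 : StrongDual ℝ (Lip0 M q)) ≤ repCost ([] : List (ℝ × M × M)) :=
      NW_le q (by simp)
    simpa using h
  -- Hahn–Banach argument
  set V := Submodule.span ℝ (Set.range (deltaF M q)) with hV
  set mhat : ↥V := ⟨m, hm⟩ with hmhat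
  set N : ↥V → ℝ := fun v => NW q v.val with hN
  have hNz : (0:ℝ) ≤ N 0 := NW_nonneg q 0 (Submodule.zero_mem _)
  have N_hom : ∀ c : ℝ, 0 < c → ∀ x : ↥V, N (c • x) = c * N x := fun c hc x =>
    NW_smul q c hc x.val x.property
  have N_add : ∀ x y : ↥V, N (x + y) ≤ N x + N y := fun x y =>
    NW_add q x.val y.val x.property y.property
  have Hsm : ∀ c : ℝ, c • mhat = 0 → c • NW q m = 0 := by
    intro c hcm
    have hc0 : c • m = 0 := congrArg Subtype.val hcm
    by_cases hc : c = 0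
    · rw [hc, zero_smul]
    · exfalso
      apply hm0
      rw [← inv_smul_smul₀ hc m, hc0, smul_zero]
  set f := LinearPMap.mkSpanSingleton' (σ := RingHom.id ℝ) mhat (NW q m) Hsm with hf
  have hfle : ∀ x : f.domain, f x ≤ N x := by
    rintro ⟨x, hx⟩
    obtain ⟨c, rfl⟩ := Submodule.mem_span_singleton.1 hx
    show (LinearPMap.mkSpanSingleton' mhat (NW q m) Hsm) ⟨c • mhat, hx⟩ ≤ N (c • mhat)
    rw [LinearPMap.mkSpanSingleton'_apply, RingHom.id_apply, smul_eq_mul]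
    rcases lt_trichotomy c 0 with hlt | rfl | hgt
    · have hz : c • mhat + (-c) • mhat = 0 := by rw [← add_smul]; simp
      have h0 : (0:ℝ) ≤ N (c • mhat) + N ((-c) • mhat) := by
        have h1 := N_add (c • mhat) ((-c) • mhat)
        rw [hz] at h1
        linarith
      have hneg : N ((-c) • mhat) = (-c) * N mhat := N_hom (-c) (by linarith) mhat
      have hNm : N mhat = NW q m := rfl
      rw [hneg, hNm] at h0
      linarith
    · rw [zero_smul, zero_mul]
      exact hNz
    · rw [N_hom c hgt mhat]
  obtain ⟨φ, hφf, hφle⟩ := exists_extension_of_le_sublinear f N N_hom N_add hfle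
  -- the associated Lipschitz function
  have hδmem : ∀ z : M, deltaF M q z ∈ V := fun z => Submodule.subset_span ⟨z, rfl⟩
  set F : M → ℝ := fun z => φ ⟨deltaF M q z, hδmem z⟩ with hF
  have hub : ∀ a b : M, φ (⟨deltaF M q a, hδmem a⟩ - ⟨deltaF M q b, hδmem b⟩) ≤ dist a b := by
    intro a b
    refine (hφle _).trans ?_
    have h : N (⟨deltaF M q a, hδmem a⟩ - ⟨deltaF M q b, hδmem b⟩) =
        NW q (deltaF M q a - deltaF M q b) := rfl
    rw [h]
    exact NW_mol_le q a b
  have hFdiff : ∀ x y : M, |F x - F y| ≤ dist x y := by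
    intro x y
    have h1 : F x - F y = φ (⟨deltaF M q x, hδmem x⟩ - ⟨deltaF M q y, hδmem y⟩) := by
      exact (map_sub φ _ _).symm
    have h2 : F y - F x = φ (⟨deltaF M q y, hδmem y⟩ - ⟨deltaF M q x, hδmem x⟩) := by
      exact (map_sub φ _ _).symm
    rw [abs_le]
    constructor
    · have hb := hub y x
      rw [← h2, dist_comm y x] at hb
      linarith
    · rw [h1]; exact hub x y
  have hFq : F q = 0 := by
    have hz : (⟨deltaF M q q, hδmem q⟩ : ↥V) = 0 := by
      apply Subtype.ext; simp [deltaF_base]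
    show φ ⟨deltaF M q q, hδmem q⟩ = 0
    rw [hz, map_zero]
  set ghat : Lip0 M q := ⟨F, ⟨1, LipschitzWith.of_dist_le_mul fun x y => by
      rw [Real.dist_eq, NNReal.coe_one, one_mul]; exact hFdiff x y⟩, hFq⟩ with hghat
  have hghat_norm : ‖ghat‖ ≤ 1 := by
    rw [Lip0.norm_def]
    apply csInf_le (Lip0.lipSet_bddBelow _)
    exact ⟨zero_le_one, fun x y => by rw [one_mul]; exact hFdiff x y⟩
  -- φ agrees with evaluation at ghat
  have hkey : ∀ (v : StrongDual ℝ (Lip0 M q)) (hv : v ∈ V), φ ⟨v, hv⟩ = v ghat := by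
    intro v hv
    induction hv using Submodule.span_induction with
    | mem x hx =>
        obtain ⟨z, rfl⟩ := hx
        rfl
    | zero =>
        have h : (⟨(0 : StrongDual ℝ (Lip0 M q)), Submodule.zero_mem V⟩ : ↥V) = 0 := rfl
        rw [h, map_zero]; simp
    | add x y hx hy ihx ihy =>
        have h : (⟨x + y, Submodule.add_mem V hx hy⟩ : ↥V) = ⟨x, hx⟩ + ⟨y, hy⟩ := rfl
        rw [h, map_add, ihx, ihy]; simp
    | smul c x hx ihx =>
        have h : (⟨c • x, Submodule.smul_mem V c hx⟩ : ↥V) = c • (⟨x, hx⟩ : ↥V) := rfl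
        rw [h, map_smul, ihx]; simp
  have hphim : φ mhat = NW q m := by
    have h := hφf ⟨mhat, Submodule.mem_span_singleton_self mhat⟩
    exact h.trans (LinearPMap.mkSpanSingleton'_apply_self mhat (NW q m) Hsm _)
  have hNWm : NW q m = m ghat := by rw [← hphim]; exact hkey m hm
  rw [hNWm]
  calc m ghat ≤ |m ghat| := le_abs_self _
    _ ≤ ‖m‖ * ‖ghat‖ := by
        have h := m.le_opNorm ghat
        simpa [Real.norm_eq_abs] using h
    _ ≤ ‖m‖ * 1 := mul_le_mul_of_nonneg_left hghat_norm (norm_nonneg m)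
    _ = ‖m‖ := mul_one _

lemma exists_good_rep (q : M) (m : StrongDual ℝ (Lip0 M q))
    (hm : m ∈ Submodule.span ℝ (Set.range (deltaF M q))) {ε : ℝ} (hε : 0 < ε) :
    ∃ l : List (ℝ × M × M), repSum q l = m ∧ repCost l ≤ ‖m‖ + ε := by
  obtain ⟨l₀, hl₀⟩ := exists_rep q m hm
  obtain ⟨c, ⟨l, hl, rfl⟩, hc⟩ :=
    Real.lt_sInf_add_pos (s := repSet q m) ⟨repCost l₀, l₀, hl₀, rfl⟩ hε
  exact ⟨l, hl, by
    have h1 := NW_le_norm q m hm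
    have h2 : repCost l < NW q m + ε := hc
    linarith⟩

/-! ### Magic function estimates -/

lemma magic_eq (p q : M) (hpq : p ≠ q) (t : M) :
    magicFun q p q t = dist p q *
      ((dist t q - dist t p) / (dist t q + dist t p) + 1) / 2 := by
  have hd : dist q p ≠ 0 := by
    rw [dist_comm]; exact dist_ne_zero.2 hpq
  unfold magicFun
  rw [dist_self]
  field_simp
  ring

lemma magic_diff_le (p q : M) (hpq : p ≠ q) (x y : M) :
    |magicFun q p q x - magicFun q p q y| ≤
      dist p q / (dist x q + dist x p) * dist x y := by
  set a := dist x q with ha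
  set b := dist x p with hb
  set a' := dist y q with ha'
  set b' := dist y p with hb'
  set d := dist p q with hd
  have hdpos : 0 < d := dist_pos.2 hpq
  have hu : d ≤ a + b := by
    rw [ha, hb, hd]
    calc dist p q ≤ dist p x + dist x q := dist_triangle p x q
      _ = dist x q + dist x p := by rw [dist_comm p x]; ring
  have hu' : d ≤ a' + b' := by
    rw [ha', hb', hd]
    calc dist p q ≤ dist p y + dist y q := dist_triangle p y q
      _ = dist y q + dist y p := by rw [dist_comm p y]; ring
  have hupos : 0 < a + b := lt_of_lt_of_le hdpos hu
  have hupos' : 0 < a' + b' := lt_of_lt_of_le hdpos hu'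
  have hdiff : magicFun q p q x - magicFun q p q y =
      d * (a * b' - a' * b) / ((a + b) * (a' + b')) := by
    rw [magic_eq p q hpq x, magic_eq p q hpq y]
    rw [← ha, ← hb, ← ha', ← hb', ← hd]
    field_simp
    ring
  rw [hdiff]
  have habs : |a * b' - a' * b| ≤ (a' + b') * dist x y := by
    have h1 : |a - a'| ≤ dist x y := abs_dist_sub_le x y q
    have h2 : |b' - b| ≤ dist x y := by
      rw [hb', hb, dist_comm x y]; exact abs_dist_sub_le y x p
    have : a * b' - a' * b = b' * (a - a') + a' * (b' - b) := by ring
    rw [this]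
    calc |b' * (a - a') + a' * (b' - b)| ≤ |b' * (a - a')| + |a' * (b' - b)| := abs_add_le _ _
      _ = b' * |a - a'| + a' * |b' - b| := by
          rw [abs_mul, abs_mul, abs_of_nonneg dist_nonneg, abs_of_nonneg dist_nonneg]
      _ ≤ b' * dist x y + a' * dist x y := by
          apply add_le_add
          · exact mul_le_mul_of_nonneg_left h1 dist_nonneg
          · exact mul_le_mul_of_nonneg_left h2 dist_nonneg
      _ = (a' + b') * dist x y := by ring
  rw [abs_div, abs_of_pos (by positivity : (0:ℝ) < (a + b) * (a' + b')), abs_mul,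
    abs_of_pos hdpos]
  rw [div_le_iff₀ (by positivity : (0:ℝ) < (a + b) * (a' + b'))]
  calc d * |a * b' - a' * b| ≤ d * ((a' + b') * dist x y) :=
        mul_le_mul_of_nonneg_left habs hdpos.le
    _ = d / (a + b) * dist x y * ((a + b) * (a' + b')) := by
        field_simp

lemma magic_lip (p q : M) (hpq : p ≠ q) (x y : M) :
    |magicFun q p q x - magicFun q p q y| ≤ dist x y := by
  have h := magic_diff_le p q hpq x y
  have hdpos : (0:ℝ) < dist p q := dist_pos.2 hpq
  have hu : dist p q ≤ dist x q + dist x p :=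
    calc dist p q ≤ dist p x + dist x q := dist_triangle p x q
      _ = dist x q + dist x p := by rw [dist_comm p x]; ring
  have : dist p q / (dist x q + dist x p) ≤ 1 := by
    rw [div_le_one (lt_of_lt_of_le hdpos hu)]; exact hu
  calc |magicFun q p q x - magicFun q p q y|
      ≤ dist p q / (dist x q + dist x p) * dist x y := h
    _ ≤ 1 * dist x y := mul_le_mul_of_nonneg_right this dist_nonneg
    _ = dist x y := one_mul _

lemma magic_bad (p q : M) (hpq : p ≠ q) {α : ℝ} (hα0 : 0 < α) (hα1 : α < 1) (x y : M)
    (hx : ¬ dist p x + dist x q ≤ dist p q / (1 - α)) :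
    |magicFun q p q x - magicFun q p q y| ≤ (1 - α) * dist x y := by
  have h := magic_diff_le p q hpq x y
  have hdpos : (0:ℝ) < dist p q := dist_pos.2 hpq
  have h1α : (0:ℝ) < 1 - α := by linarith
  push_neg at hx
  have hx' : dist p q / (1 - α) < dist x q + dist x p := by
    calc dist p q / (1 - α) < dist p x + dist x q := hx
      _ = dist x q + dist x p := by rw [dist_comm p x]; ring
  have hupos : (0:ℝ) < dist x q + dist x p := lt_trans (by positivity) hx'
  have hkey : dist p q / (dist x q + dist x p) ≤ 1 - α := by
    rw [div_le_iff₀ hupos]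
    have := mul_le_mul_of_nonneg_left hx'.le h1α.le
    calc dist p q = (1 - α) * (dist p q / (1 - α)) := by field_simp
      _ ≤ (1 - α) * (dist x q + dist x p) := this
  calc |magicFun q p q x - magicFun q p q y|
      ≤ dist p q / (dist x q + dist x p) * dist x y := h
    _ ≤ (1 - α) * dist x y := mul_le_mul_of_nonneg_right hkey dist_nonneg

/-! ### List splitting -/

lemma repSum_filter (q : M) (P : ℝ × M × M → Bool) (l : List (ℝ × M × M)) :
    repSum q (l.filter P) + repSum q (l.filter fun t => !P t) = repSum q l := by
  rw [← repSum_append]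
  unfold repSum
  exact ((List.filter_append_perm P l).map _).sum_eq

lemma repCost_filter (P : ℝ × M × M → Bool) (l : List (ℝ × M × M)) :
    repCost (l.filter P) + repCost (l.filter fun t => !P t) = repCost l := by
  rw [← repCost_append]
  unfold repCost
  exact ((List.filter_append_perm P l).map _).sum_eq

lemma repSum_mem_spanOn (q : M) (S : Set M) (l : List (ℝ × M × M))
    (h : ∀ t ∈ l, t.2.1 ∈ S ∧ t.2.2 ∈ S) :
    repSum q l ∈ Submodule.span ℝ (deltaF M q '' S) := by
  induction l with
  | nil => simp only [repSum_nil]; exact Submodule.zero_mem _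
  | cons t l ih =>
      rw [repSum_cons]
      refine Submodule.add_mem _ ?_ (ih fun s hs => h s (List.mem_cons_of_mem t hs))
      obtain ⟨h1, h2⟩ := h t List.mem_cons_self
      exact Submodule.smul_mem _ _ (Submodule.sub_mem _
        (Submodule.subset_span ⟨t.2.1, h1, rfl⟩)
        (Submodule.subset_span ⟨t.2.2, h2, rfl⟩))

end Aux

set_option maxHeartbeats 1000000 in
/-- Lemma 5: if `[p,q] = {p,q}`, `μ` is in the unit ball of `F(M)` (base point `q`) and
`⟨μ, f_{pq}⟩ = 1`, then for all `ε, α ∈ (0, 1/2)` the element `μ` lies within distance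
`2ε` of `F([p,q]_α)`. -/
theorem stmt_12 {M : Type*} [MetricSpace M] [CompleteSpace M] (p q : M) (hpq : p ≠ q)
    (hseg : {z : M | dist p q = dist z p + dist z q} = {p, q})
    (μ : StrongDual ℝ (Lip0 M q)) (hμF : μ ∈ FreeSpace M q) (hμ1 : ‖μ‖ ≤ 1)
    (g : Lip0 M q) (hg : ∀ t, g t = magicFun q p q t) (hpair : μ g = 1)
    (ε α : ℝ) (hε : ε ∈ Set.Ioo (0 : ℝ) (1/2)) (hα : α ∈ Set.Ioo (0 : ℝ) (1/2)) :
    ∃ ν ∈ FreeSpaceOn M q {x : M | dist p x + dist x q ≤ dist p q / (1 - α)},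
      ‖μ - ν‖ ≤ 2 * ε := by
  classical
  obtain ⟨hε0, hε2⟩ := hε
  obtain ⟨hα0, hα2⟩ := hα
  have hdpos : (0:ℝ) < dist p q := dist_pos.2 hpq
  set S : Set M := {x : M | dist p x + dist x q ≤ dist p q / (1 - α)} with hS
  set ε' : ℝ := ε * α / 2 with hε'
  have hε'0 : 0 < ε' := by positivity
  -- norm of g is at most 1
  have hg1 : ‖g‖ ≤ 1 := by
    rw [Lip0.norm_def]
    apply csInf_le (Lip0.lipSet_bddBelow _)
    refine ⟨zero_le_one, fun x y => ?_⟩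
    rw [hg x, hg y, one_mul]
    exact magic_lip p q hpq x y
  -- approximate μ by a finite combination m
  have hμc : μ ∈ closure (Submodule.span ℝ (Set.range (deltaF M q)) :
      Set (StrongDual ℝ (Lip0 M q))) := by
    have := hμF
    rw [FreeSpace] at this
    exact this
  obtain ⟨m, hmsp, hmd⟩ := Metric.mem_closure_iff.1 hμc ε' hε'0
  have hμm : ‖μ - m‖ ≤ ε' := by
    rw [← dist_eq_norm]; exact hmd.le
  -- a near-optimal representation of m
  obtain ⟨l, hlsum, hlcost⟩ := exists_good_rep q m hmsp hε'0
  -- split into good and bad parts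
  set P : ℝ × M × M → Bool := fun t => decide (t.2.1 ∈ S ∧ t.2.2 ∈ S) with hP
  set l₁ := l.filter P with hl₁
  set l₂ := l.filter (fun t => !P t) with hl₂
  set ν : StrongDual ℝ (Lip0 M q) := repSum q l₁ with hν
  have hsplit : repSum q l₁ + repSum q l₂ = m := by
    rw [hl₁, hl₂, repSum_filter, hlsum]
  have hcsplit : repCost l₁ + repCost l₂ = repCost l := by
    rw [hl₁, hl₂, repCost_filter]
  -- ν belongs to the subspace
  have hνmem : ν ∈ FreeSpaceOn M q S := by
    apply Submodule.le_topologicalClosure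
    apply repSum_mem_spanOn
    intro t ht
    have := List.of_mem_filter ht
    rw [hP] at this
    exact of_decide_eq_true this
  refine ⟨ν, hνmem, ?_⟩
  -- bound on ‖m‖
  have hmle : ‖m‖ ≤ 1 + ε' := by
    calc ‖m‖ ≤ ‖μ‖ + ‖m - μ‖ := by
          have := norm_add_le μ (m - μ); simpa using this
      _ ≤ 1 + ε' := add_le_add hμ1 (by rwa [norm_sub_rev] at hμm)
  -- lower bound on m g
  have hmg : 1 - ε' ≤ m g := by
    have h1 : |(μ - m) g| ≤ ε' := by
      calc |(μ - m) g| ≤ ‖μ - m‖ * ‖g‖ := by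
            have := (μ - m).le_opNorm g
            simpa [Real.norm_eq_abs] using this
        _ ≤ ε' * 1 := mul_le_mul hμm hg1 (norm_nonneg g) (le_trans (norm_nonneg _) hμm)
        _ = ε' := mul_one _
    have h2 : (μ - m) g = 1 - m g := by
      rw [ContinuousLinearMap.sub_apply, hpair]
    rw [h2, abs_le] at h1
    linarith [h1.2]
  -- upper bound on m g via the representation
  have hterm1 : ∀ t ∈ l₁, t.1 * (g t.2.1 - g t.2.2) ≤ |t.1| * dist t.2.1 t.2.2 := by
    intro t ht
    calc t.1 * (g t.2.1 - g t.2.2) ≤ |t.1 * (g t.2.1 - g t.2.2)| := le_abs_self _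
      _ = |t.1| * |g t.2.1 - g t.2.2| := abs_mul _ _
      _ ≤ |t.1| * dist t.2.1 t.2.2 := by
          apply mul_le_mul_of_nonneg_left _ (abs_nonneg _)
          rw [hg, hg]
          exact magic_lip p q hpq _ _
  have hterm2 : ∀ t ∈ l₂, t.1 * (g t.2.1 - g t.2.2) ≤
      (1 - α) * (|t.1| * dist t.2.1 t.2.2) := by
    intro t ht
    have hbad : ¬ (t.2.1 ∈ S ∧ t.2.2 ∈ S) := by
      have := List.of_mem_filter ht
      simp only [hP, Bool.not_eq_true', decide_eq_false_iff_not] at this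
      exact this
    have hgb : |g t.2.1 - g t.2.2| ≤ (1 - α) * dist t.2.1 t.2.2 := by
      rw [hg, hg]
      rcases not_and_or.1 hbad with hb | hb
      · exact magic_bad p q hpq hα0 (by linarith) _ _ hb
      · rw [abs_sub_comm, dist_comm]
        exact magic_bad p q hpq hα0 (by linarith) _ _ hb
    calc t.1 * (g t.2.1 - g t.2.2) ≤ |t.1 * (g t.2.1 - g t.2.2)| := le_abs_self _
      _ = |t.1| * |g t.2.1 - g t.2.2| := abs_mul _ _
      _ ≤ |t.1| * ((1 - α) * dist t.2.1 t.2.2) :=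
          mul_le_mul_of_nonneg_left hgb (abs_nonneg _)
      _ = (1 - α) * (|t.1| * dist t.2.1 t.2.2) := by ring
  have hsum1 : repSum q l₁ g ≤ repCost l₁ := by
    rw [repSum_apply]
    calc (l₁.map fun t => t.1 * (g t.2.1 - g t.2.2)).sum
        ≤ (l₁.map fun t => |t.1| * dist t.2.1 t.2.2).sum := by
          apply List.sum_le_sum
          intro t ht
          exact hterm1 t ht
      _ = repCost l₁ := rfl
  have hsum2 : repSum q l₂ g ≤ (1 - α) * repCost l₂ := by
    rw [repSum_apply]
    calc (l₂.map fun t => t.1 * (g t.2.1 - g t.2.2)).sum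
        ≤ (l₂.map fun t => (1 - α) * (|t.1| * dist t.2.1 t.2.2)).sum := by
          apply List.sum_le_sum
          intro t ht
          exact hterm2 t ht
      _ = (1 - α) * repCost l₂ := by
          rw [repCost, ← List.sum_map_mul_left]
          all_goals rw [List.map_map]
          all_goals rfl
  have hmg2 : m g ≤ repCost l - α * repCost l₂ := by
    have : m g = repSum q l₁ g + repSum q l₂ g := by
      rw [← hsplit, ContinuousLinearMap.add_apply]
    rw [this, ← hcsplit]
    have := add_le_add hsum1 hsum2
    linarith
  -- bound the bad cost
  have hbadcost : α * repCost l₂ ≤ 3 * ε' := by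
    have h1 : repCost l ≤ 1 + 2 * ε' := by
      have := hlcost.trans (by linarith : ‖m‖ + ε' ≤ 1 + ε' + ε')
      linarith
    linarith
  have hl₂cost : repCost l₂ ≤ 3 * ε' / α := by
    rw [le_div_iff₀ hα0]
    linarith [hbadcost]
  -- conclude
  have hmν : ‖m - ν‖ ≤ 3 * ε' / α := by
    have : m - ν = repSum q l₂ := by
      rw [hν, ← hsplit]; abel
    rw [this]
    exact (norm_repSum_le q l₂).trans hl₂cost
  calc ‖μ - ν‖ ≤ ‖μ - m‖ + ‖m - ν‖ := by
        have := norm_add_le (μ - m) (m - ν); simpa using this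
    _ ≤ ε' + 3 * ε' / α := add_le_add hμm hmν
    _ ≤ 2 * ε := by
        have h1 : 3 * ε' / α = 3 * ε / 2 := by
          rw [hε']; field_simp
        have h2 : ε' ≤ ε / 2 := by rw [hε']; nlinarith
        linarith
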